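/- Let V be a finite-dimensional real vector space with a nondegenerate alternating bilinear form ω, and let J₀ and J₁ be two complex structures on V, each compatible with ω. Then J₀ and J₁ are conjugate by a linear symplectomorphism: there exists a linear automorphism A : V → V with ω(Ax, Ay) = ω(x, y) for all x, y ∈ V, such that A ∘ J₀ = J₁ ∘ A. -/

import Mathlib

open Complex

namespace CCSAux

variable {V : Type*} [AddCommGroup V] [Module ℝ V]

/-- Bundle of a symplectic form with a compatible complex structure. -/
structure CompatTriple (V : Type*) [AddCommGroup V] [Module ℝ V] : Type _ where
  ω : V →ₗ[ℝ] V →ₗ[ℝ] ℝ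
  J : V →ₗ[ℝ] V
  halt : ∀ x, ω x x = 0
  hJ : ∀ x, J (J x) = -x
  hω : ∀ x y, ω (J x) (J y) = ω x y
  hsymm : ∀ x y, ω x (J y) = ω y (J x)
  hpos : ∀ x, x ≠ 0 → 0 < ω x (J x)

namespace CompatTriple

variable (T : CompatTriple V)

theorem skew (x y : V) : T.ω x y = -T.ω y x := by
  have h := T.halt (x + y)
  simp [map_add, T.halt] at h
  linarith

theorem skewJ (x y : V) : T.ω (T.J x) y = -T.ω x (T.J y) := by
  rw [T.skew, T.hsymm]

end CompatTriple

/-- Type synonym for `V` carrying the complex structure of `T`. -/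
def WithJ (T : CompatTriple V) : Type _ := V

namespace WithJ

variable (T : CompatTriple V)

instance : AddCommGroup (WithJ T) := inferInstanceAs (AddCommGroup V)
instance : Module ℝ (WithJ T) := inferInstanceAs (Module ℝ V)

/-- `T.J` viewed as an endomorphism of the synonym. -/
def Jw : WithJ T →ₗ[ℝ] WithJ T := T.J

theorem Jw_sq (x : WithJ T) : Jw T (Jw T x) = -x := T.hJ x

instance : SMul ℂ (WithJ T) := ⟨fun c x => c.re • x + c.im • Jw T x⟩

theorem csmul_def (c : ℂ) (x : WithJ T) :
    c • x = c.re • x + c.im • Jw T x := rfl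

theorem I_smul (x : WithJ T) : (Complex.I) • x = Jw T x := by
  rw [csmul_def]; simp

instance : Module ℂ (WithJ T) :=
  Module.ofMinimalAxioms
    (fun c x y => by
      simp only [csmul_def, map_add, smul_add]
      abel)
    (fun c d x => by
      simp only [csmul_def, Complex.add_re, Complex.add_im, add_smul]
      abel)
    (fun c d x => by
      simp only [csmul_def, map_add, map_smul, Jw_sq, Complex.mul_re, Complex.mul_im,
        smul_add, smul_smul, smul_neg, sub_smul, add_smul]
      abel)
    (fun x => by simp [csmul_def])

instance : IsScalarTower ℝ ℂ (WithJ T) :=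
  ⟨fun r c x => by
    simp only [csmul_def, Complex.smul_re, Complex.smul_im, smul_eq_mul, smul_add,
      smul_smul]⟩

noncomputable instance : Inner ℂ (WithJ T) :=
  ⟨fun x y => ⟨T.ω x (T.J y), T.ω x y⟩⟩

theorem inner_def (x y : WithJ T) :
    (inner ℂ x y : ℂ) = ⟨T.ω x (T.J y), T.ω x y⟩ := rfl

theorem inner_im (x y : WithJ T) : (inner ℂ x y : ℂ).im = T.ω x y := rfl

theorem omega_Jw (x y : WithJ T) : T.ω x (Jw T y) = T.ω x (T.J y) := rfl

theorem omega_Jw' (x y : WithJ T) : T.ω (Jw T x) y = T.ω (T.J x) y := rfl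

theorem omega_add (x y : WithJ T) (z : V) : T.ω (x + y) z = T.ω x z + T.ω y z :=
  LinearMap.map_add₂ T.ω x y z

theorem omega_smul (r : ℝ) (x : WithJ T) (z : V) : T.ω (r • x) z = r * T.ω x z :=
  LinearMap.map_smul₂ T.ω r x z

theorem omega_Jw_app (x : WithJ T) (y : V) : T.ω (Jw T x) y = T.ω (T.J x) y := rfl

theorem omega_add_w (x y z : WithJ T) : T.ω (x + y) z = T.ω x z + T.ω y z :=
  LinearMap.map_add₂ T.ω x y z

theorem omega_smul_w (r : ℝ) (x z : WithJ T) : T.ω (r • x) z = r * T.ω x z :=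
  LinearMap.map_smul₂ T.ω r x z

theorem hω_w (x y : WithJ T) : T.ω (T.J x) (T.J y) = T.ω x y := T.hω x y

theorem skewJ_w (x y : WithJ T) : T.ω (T.J x) y = -T.ω x (T.J y) := T.skewJ x y

theorem omega_zero : T.ω (0 : WithJ T) = 0 := map_zero T.ω

noncomputable instance core : InnerProductSpace.Core ℂ (WithJ T) where
  inner := inner ℂ
  conj_inner_symm := fun x y => by
    apply Complex.ext <;>
      simp [inner_def, T.hsymm x y, T.skew x y]
  re_inner_nonneg := fun x => by
    rcases eq_or_ne (x : V) 0 with h | h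
    · have hx : x = (0 : WithJ T) := h
      simp only [hx]
      simp [inner_def, omega_zero]
    · exact le_of_lt (by simpa [inner_def] using T.hpos x h)
  add_left := fun x y z => by
    apply Complex.ext <;> simp [inner_def, map_add, omega_add, omega_add_w]
  smul_left := fun x y c => by
    apply Complex.ext <;>
      · simp only [inner_def, csmul_def, map_add, map_smul, LinearMap.add_apply,
          LinearMap.smul_apply, omega_Jw, omega_Jw', omega_add, omega_smul, omega_Jw_app, omega_add_w, omega_smul_w, hω_w, skewJ_w,
          T.hJ, T.hω, Complex.mul_re, Complex.mul_im, Complex.conj_re, Complex.conj_im,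
          smul_eq_mul, map_neg, LinearMap.neg_apply, T.skewJ]
        ring
  definite := fun x hx => by
    by_contra h
    have hpos := T.hpos x h
    have h2 : (inner ℂ x x : ℂ).re = 0 := by rw [hx]; rfl
    rw [show (inner ℂ x x : ℂ).re = T.ω x (T.J x) from rfl] at h2
    linarith

noncomputable instance : NormedAddCommGroup (WithJ T) :=
  @InnerProductSpace.Core.toNormedAddCommGroup ℂ (WithJ T) _ _ _ (core T)

noncomputable instance : InnerProductSpace ℂ (WithJ T) :=
  InnerProductSpace.ofCore (core T).toCore

/-- The identity, as a real-linear equivalence between `V` and `WithJ T`. -/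
def equiv : V ≃ₗ[ℝ] WithJ T where
  toFun := id
  invFun := id
  map_add' := fun _ _ => rfl
  map_smul' := fun _ _ => rfl
  left_inv := fun _ => rfl
  right_inv := fun _ => rfl

instance [FiniteDimensional ℝ V] : FiniteDimensional ℝ (WithJ T) :=
  inferInstanceAs (FiniteDimensional ℝ V)

instance [FiniteDimensional ℝ V] : FiniteDimensional ℂ (WithJ T) :=
  Module.Finite.of_restrictScalars_finite ℝ ℂ (WithJ T)

theorem finrank_eq [FiniteDimensional ℝ V] :
    2 * Module.finrank ℂ (WithJ T) = Module.finrank ℝ V := by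
  have h := Module.finrank_mul_finrank ℝ ℂ (WithJ T)
  rw [Complex.finrank_real_complex] at h
  rw [h]
  exact (equiv T).symm.finrank_eq

end WithJ

end CCSAux

/-- Any two complex structures `J₀`, `J₁` on a symplectic vector space
`(V, ω)` which are compatible with `ω` are conjugate by a linear symplectomorphism:
there is a linear automorphism `A` of `V` preserving `ω` with `A ∘ J₀ = J₁ ∘ A`. -/
theorem compatible_complex_structures_conjugate
    {V : Type*} [AddCommGroup V] [Module ℝ V] [FiniteDimensional ℝ V]
    (ω : V →ₗ[ℝ] V →ₗ[ℝ] ℝ)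
    (halt : ∀ x : V, ω x x = 0)
    (hnondeg : ∀ x : V, (∀ y : V, ω x y = 0) → x = 0)
    (J₀ J₁ : V →ₗ[ℝ] V)
    (h₀sq : J₀ ∘ₗ J₀ = -LinearMap.id)
    (h₀ω : ∀ x y : V, ω (J₀ x) (J₀ y) = ω x y)
    (h₀symm : ∀ x y : V, ω x (J₀ y) = ω y (J₀ x))
    (h₀pos : ∀ x : V, x ≠ 0 → 0 < ω x (J₀ x))
    (h₁sq : J₁ ∘ₗ J₁ = -LinearMap.id)
    (h₁ω : ∀ x y : V, ω (J₁ x) (J₁ y) = ω x y)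
    (h₁symm : ∀ x y : V, ω x (J₁ y) = ω y (J₁ x))
    (h₁pos : ∀ x : V, x ≠ 0 → 0 < ω x (J₁ x)) :
    ∃ A : V ≃ₗ[ℝ] V,
      (∀ x y : V, ω (A x) (A y) = ω x y) ∧
      (∀ x : V, A (J₀ x) = J₁ (A x)) := by
  classical
  have h₀sq' : ∀ x, J₀ (J₀ x) = -x := fun x => by
    have := LinearMap.ext_iff.mp h₀sq x; simpa using this
  have h₁sq' : ∀ x, J₁ (J₁ x) = -x := fun x => by
    have := LinearMap.ext_iff.mp h₁sq x; simpa using this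
  let T₀ : CCSAux.CompatTriple V :=
    ⟨ω, J₀, halt, h₀sq', h₀ω, h₀symm, h₀pos⟩
  let T₁ : CCSAux.CompatTriple V :=
    ⟨ω, J₁, halt, h₁sq', h₁ω, h₁symm, h₁pos⟩
  have hrank : Module.finrank ℂ (CCSAux.WithJ T₀) = Module.finrank ℂ (CCSAux.WithJ T₁) := by
    have h0 := CCSAux.WithJ.finrank_eq T₀
    have h1 := CCSAux.WithJ.finrank_eq T₁
    omega
  let b₀ := stdOrthonormalBasis ℂ (CCSAux.WithJ T₀)
  let b₁ := (stdOrthonormalBasis ℂ (CCSAux.WithJ T₁)).reindex (finCongr hrank.symm)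
  let A' : CCSAux.WithJ T₀ ≃ₗᵢ[ℂ] CCSAux.WithJ T₁ := b₀.repr.trans b₁.repr.symm
  let A : V ≃ₗ[ℝ] V :=
    (CCSAux.WithJ.equiv T₀).trans
      ((A'.toLinearEquiv.restrictScalars ℝ).trans (CCSAux.WithJ.equiv T₁).symm)
  refine ⟨A, fun x y => ?_, fun x => ?_⟩
  · have h := A'.inner_map_map (CCSAux.WithJ.equiv T₀ x) (CCSAux.WithJ.equiv T₀ y)
    exact congrArg Complex.im h
  · have h : A' (Complex.I • CCSAux.WithJ.equiv T₀ x)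
        = Complex.I • A' (CCSAux.WithJ.equiv T₀ x) :=
      A'.map_smul Complex.I _
    rw [CCSAux.WithJ.I_smul, CCSAux.WithJ.I_smul] at h
    exact h
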